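/- Let ABCD be a cyclic quadrilateral, and let P, Q, R be the feet of the perpendiculars from D to lines BC, CA, AB respectively. If the internal bisectors of angles ∠ABC and ∠ADC meet on segment AC, then PQ = QR. -/

import Mathlib

open EuclideanGeometry

private lemma dist_sq_coord (X Y : EuclideanSpace ℝ (Fin 2)) :
    dist X Y ^ 2 = (X 0 - Y 0)^2 + (X 1 - Y 1)^2 := by
  rw [EuclideanSpace.dist_eq, Real.sq_sqrt (Finset.sum_nonneg fun i _ => sq_nonneg _)]
  simp [Fin.sum_univ_two, Real.dist_eq, sq_abs]

private lemma inner_coord (X Y : EuclideanSpace ℝ (Fin 2)) :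
    (inner ℝ X Y : ℝ) = X 0 * Y 0 + X 1 * Y 1 := by
  simp [PiLp.inner_apply, Fin.sum_univ_two, RCLike.inner_apply, conj_trivial]
  ring

private lemma delta_pos {X Y : EuclideanSpace ℝ (Fin 2)} (h : X ≠ Y) :
    0 < (X 0 - Y 0)^2 + (X 1 - Y 1)^2 := by
  have h1 := dist_sq_coord X Y
  have h2 : 0 < dist X Y := dist_pos.2 h
  nlinarith

private lemma foot_dist (x0 x1 y0 y1 z0 z1 d0 d1 p0 p1 q0 q1 t u : ℝ)
    (hp0 : p0 = t*(y0-x0)+x0) (hp1 : p1 = t*(y1-x1)+x1)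
    (hq0 : q0 = u*(z0-y0)+y0) (hq1 : q1 = u*(z1-y1)+y1)
    (ht : (d0-p0)*(x0-y0)+(d1-p1)*(x1-y1) = 0)
    (hu : (d0-q0)*(y0-z0)+(d1-q1)*(y1-z1) = 0) :
    ((p0-q0)^2+(p1-q1)^2) * (((x0-y0)^2+(x1-y1)^2) * ((y0-z0)^2+(y1-z1)^2))
      = ((d0-y0)^2+(d1-y1)^2) * ((x0-y0)*(z1-y1)-(x1-y1)*(z0-y0))^2 := by
  subst hp0 hp1 hq0 hq1
  linear_combination (-((1-t)*((x0-y0)^2+(x1-y1)^2) + ((d0-y0)*(x0-y0)+(d1-y1)*(x1-y1)))*((z0-y0)^2+(z1-y1)^2) + 2*((x0-y0)*(z0-y0)+(x1-y1)*(z1-y1))*((d0-y0)*(z0-y0)+(d1-y1)*(z1-y1))) * ht - (-( u*((z0-y0)^2+(z1-y1)^2) + ((d0-y0)*(z0-y0)+(d1-y1)*(z1-y1)))*((x0-y0)^2+(x1-y1)^2) + 2*((x0-y0)*(z0-y0)+(x1-y1)*(z1-y1))*(1-t)*((x0-y0)^2+(x1-y1)^2)) * hu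

private lemma not_collinear_inner_lt {x y z : EuclideanSpace ℝ (Fin 2)}
    (h : ¬ Collinear ℝ ({x, y, z} : Set (EuclideanSpace ℝ (Fin 2)))) :
    (inner ℝ (x - y) (z - y) : ℝ) < ‖x - y‖ * ‖z - y‖ := by
  rcases lt_or_eq_of_le (real_inner_le_norm (x - y) (z - y)) with hlt | heq
  · exact hlt
  exfalso
  apply h
  have hsm := inner_eq_norm_mul_iff_real.1 heq
  by_cases hzy : z = y
  · refine (collinear_pair ℝ x y).subset ?_
    intro p hp
    simp only [Set.mem_insert_iff, Set.mem_singleton_iff] at hp ⊢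
    rcases hp with h' | h' | h' <;> simp [h', hzy]
  · have hvy : ‖z - y‖ ≠ 0 := by simp [sub_eq_zero, hzy]
    have hx : x - y = (‖x - y‖ / ‖z - y‖) • (z - y) := by
      have h2 := congrArg (fun w : EuclideanSpace ℝ (Fin 2) => (‖z - y‖)⁻¹ • w) hsm
      simp only [smul_smul, inv_mul_cancel₀ hvy, one_smul] at h2
      rw [div_eq_inv_mul]
      exact h2
    have hmem : x ∈ line[ℝ, y, z] := by
      have hm : (‖x - y‖ / ‖z - y‖) • (z -ᵥ y) +ᵥ y ∈ line[ℝ, y, z] :=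
        (vadd_left_mem_affineSpan_pair).2 ⟨_, rfl⟩
      have hxe : x = (‖x - y‖ / ‖z - y‖) • (z -ᵥ y) +ᵥ y := by
        rw [vsub_eq_sub, vadd_eq_add, ← hx]; abel
      rwa [← hxe] at hm
    exact collinear_insert_of_mem_affineSpan_pair hmem

private lemma bisect {u v : EuclideanSpace ℝ (Fin 2)} {s : ℝ}
    (hlt : (inner ℝ u v : ℝ) < ‖u‖ * ‖v‖)
    (h : ‖v‖ * (inner ℝ u (u + s • (v - u)) : ℝ) = ‖u‖ * (inner ℝ (u + s • (v - u)) v : ℝ)) :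
    (1 - s) * ‖u‖ = s * ‖v‖ := by
  have hu2 : (inner ℝ u u : ℝ) = ‖u‖ ^ 2 := real_inner_self_eq_norm_sq u
  have hv2 : (inner ℝ v v : ℝ) = ‖v‖ ^ 2 := real_inner_self_eq_norm_sq v
  have e1 : (inner ℝ u (u + s • (v - u)) : ℝ)
      = (inner ℝ u u : ℝ) + s * ((inner ℝ u v : ℝ) - (inner ℝ u u : ℝ)) := by
    rw [inner_add_right, real_inner_smul_right, inner_sub_right]
  have e2 : (inner ℝ (u + s • (v - u)) v : ℝ)
      = (inner ℝ u v : ℝ) + s * ((inner ℝ v v : ℝ) - (inner ℝ u v : ℝ)) := by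
    rw [inner_add_left, real_inner_smul_left, inner_sub_left, real_inner_comm v u]
  rw [e1, e2, hu2, hv2] at h
  have hz : (‖u‖ * ‖v‖ - (inner ℝ u v : ℝ)) * ((1 - s) * ‖u‖ - s * ‖v‖) = 0 := by
    linear_combination h
  rcases mul_eq_zero.1 hz with h' | h'
  · nlinarith
  · linarith

private lemma bisect_vertex {A B C X : EuclideanSpace ℝ (Fin 2)} {s : ℝ}
    (hX : X = A + s • (C - A))
    (hnc : ¬ Collinear ℝ ({A, B, C} : Set (EuclideanSpace ℝ (Fin 2))))
    (hang : ∠ A B X = ∠ X B C) : (1 - s) * ‖A - B‖ = s * ‖C - B‖ := by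
  have hlt := not_collinear_inner_lt hnc
  have hw : X - B = (A - B) + s • ((C - B) - (A - B)) := by
    rw [hX]; module
  apply bisect hlt
  rw [← hw]
  by_cases hXB : X = B
  · simp [hXB]
  · have hXBn : ‖X - B‖ ≠ 0 := by simp [sub_eq_zero, hXB]
    have hABn : ‖A - B‖ ≠ 0 := by
      simp only [ne_eq, norm_eq_zero, sub_eq_zero]
      intro hAB
      apply hnc
      refine (collinear_pair ℝ B C).subset ?_
      intro p hp
      simp only [Set.mem_insert_iff, Set.mem_singleton_iff] at hp ⊢
      rcases hp with h' | h' | h' <;> simp [h', hAB]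
    have hCBn : ‖C - B‖ ≠ 0 := by
      simp only [ne_eq, norm_eq_zero, sub_eq_zero]
      intro hCB
      apply hnc
      refine (collinear_pair ℝ A B).subset ?_
      intro p hp
      simp only [Set.mem_insert_iff, Set.mem_singleton_iff] at hp ⊢
      rcases hp with h' | h' | h' <;> simp [h', hCB]
    have h1 : Real.cos (∠ A B X) = Real.cos (∠ X B C) := by rw [hang]
    rw [EuclideanGeometry.angle, EuclideanGeometry.angle,
      InnerProductGeometry.cos_angle, InnerProductGeometry.cos_angle] at h1
    simp only [vsub_eq_sub] at h1
    rw [div_eq_div_iff (by positivity) (by positivity)] at h1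
    apply mul_right_cancel₀ hXBn
    linear_combination h1

/-- IMO 2003 P4 (one direction): `ABCD` is a convex cyclic quadrilateral; `P`, `Q`, `R`
are the feet of the perpendiculars from `D` to lines `BC`, `CA`, `AB`.  If the internal
bisectors of `∠ABC` and `∠ADC` meet at a point of segment `AC`, then `PQ = QR`. -/
theorem imo2003_p4 (A B C D P Q R : EuclideanSpace ℝ (Fin 2))
    (hcyc : Cospherical ({A, B, C, D} : Set (EuclideanSpace ℝ (Fin 2))))
    (hconvAB : (affineSpan ℝ {A, B}).SSameSide C D)
    (hconvBC : (affineSpan ℝ {B, C}).SSameSide D A)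
    (hconvCD : (affineSpan ℝ {C, D}).SSameSide A B)
    (hconvDA : (affineSpan ℝ {D, A}).SSameSide B C)
    (hP : Collinear ℝ {B, C, P} ∧ inner ℝ (D - P) (B - C) = (0 : ℝ))
    (hQ : Collinear ℝ {C, A, Q} ∧ inner ℝ (D - Q) (C - A) = (0 : ℝ))
    (hR : Collinear ℝ {A, B, R} ∧ inner ℝ (D - R) (A - B) = (0 : ℝ))
    (hbis : ∃ X ∈ segment ℝ A C, ∠ A B X = ∠ X B C ∧ ∠ A D X = ∠ X D C) :
    dist P Q = dist Q R := by
  obtain ⟨hPcol, hPperp⟩ := hP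
  obtain ⟨hQcol, hQperp⟩ := hQ
  obtain ⟨hRcol, hRperp⟩ := hR
  -- distinctness of vertices
  have hAB : A ≠ B := fun h => hconvBC.2.2 (by rw [h]; exact left_mem_affineSpan_pair ℝ B C)
  have hAC : A ≠ C := fun h => hconvBC.2.2 (by rw [h]; exact right_mem_affineSpan_pair ℝ B C)
  have hBC : B ≠ C := fun h => hconvCD.2.2 (by rw [h]; exact left_mem_affineSpan_pair ℝ C D)
  have hCD : C ≠ D := fun h => hconvDA.2.2 (by rw [h]; exact left_mem_affineSpan_pair ℝ D A)
  -- noncollinearity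
  have hABC : ¬ Collinear ℝ ({A, B, C} : Set (EuclideanSpace ℝ (Fin 2))) := fun h =>
    hconvAB.2.1 (h.mem_affineSpan_of_mem_of_ne (by simp) (by simp) (by simp) hAB)
  have hADC : ¬ Collinear ℝ ({A, D, C} : Set (EuclideanSpace ℝ (Fin 2))) := fun h =>
    hconvCD.2.1 (h.mem_affineSpan_of_mem_of_ne (p₁ := C) (p₂ := D) (p₃ := A)
      (by simp) (by simp) (by simp) hCD)
  -- the bisector condition gives AB·CD = CB·AD
  obtain ⟨X, hXseg, hangB, hangD⟩ := hbis
  rw [segment_eq_image'] at hXseg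
  obtain ⟨s, hs01, hXeq⟩ := hXseg
  have hX : X = A + s • (C - A) := by rw [← hXeq]
  have hB1 : (1 - s) * ‖A - B‖ = s * ‖C - B‖ := bisect_vertex hX hABC hangB
  have hD1 : (1 - s) * ‖A - D‖ = s * ‖C - D‖ := bisect_vertex hX hADC hangD
  have h1s : (1 : ℝ) - s ≠ 0 := by
    intro h
    have hs1 : s = 1 := by linarith
    rw [hs1] at hB1
    have : ‖C - B‖ = 0 := by linarith [hB1]
    have : C = B := by rwa [norm_eq_zero, sub_eq_zero] at this
    exact hBC this.symm
  have key : ‖A - B‖ * ‖C - D‖ = ‖C - B‖ * ‖A - D‖ := by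
    apply mul_left_cancel₀ h1s
    linear_combination ‖C - D‖ * hB1 - ‖C - B‖ * hD1
  have keyΔ : ((A 0 - B 0)^2 + (A 1 - B 1)^2) * ((C 0 - D 0)^2 + (C 1 - D 1)^2)
      = ((C 0 - B 0)^2 + (C 1 - B 1)^2) * ((A 0 - D 0)^2 + (A 1 - D 1)^2) := by
    have h2 : (‖A - B‖ * ‖C - D‖)^2 = (‖C - B‖ * ‖A - D‖)^2 := by rw [key]
    have e1 : ‖A - B‖^2 = (A 0 - B 0)^2 + (A 1 - B 1)^2 := by
      have := dist_sq_coord A B; rwa [dist_eq_norm] at this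
    have e2 : ‖C - D‖^2 = (C 0 - D 0)^2 + (C 1 - D 1)^2 := by
      have := dist_sq_coord C D; rwa [dist_eq_norm] at this
    have e3 : ‖C - B‖^2 = (C 0 - B 0)^2 + (C 1 - B 1)^2 := by
      have := dist_sq_coord C B; rwa [dist_eq_norm] at this
    have e4 : ‖A - D‖^2 = (A 0 - D 0)^2 + (A 1 - D 1)^2 := by
      have := dist_sq_coord A D; rwa [dist_eq_norm] at this
    rw [mul_pow, mul_pow, e1, e2, e3, e4] at h2
    exact h2
  -- parametrize the feet
  have hPline : P ∈ line[ℝ, B, C] :=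
    hPcol.mem_affineSpan_of_mem_of_ne (by simp) (by simp) (by simp) hBC
  obtain ⟨tP, htP⟩ := vadd_left_mem_affineSpan_pair.1 (by rwa [← vsub_vadd P B] at hPline)
  have hQline : Q ∈ line[ℝ, C, A] :=
    hQcol.mem_affineSpan_of_mem_of_ne (by simp) (by simp) (by simp) (Ne.symm hAC)
  obtain ⟨uQ, huQ⟩ := vadd_left_mem_affineSpan_pair.1 (by rwa [← vsub_vadd Q C] at hQline)
  have hRline : R ∈ line[ℝ, A, B] :=
    hRcol.mem_affineSpan_of_mem_of_ne (by simp) (by simp) (by simp) hAB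
  obtain ⟨rR, hrR⟩ := vadd_left_mem_affineSpan_pair.1 (by rwa [← vsub_vadd R A] at hRline)
  have hP0 : P 0 = tP * (C 0 - B 0) + B 0 := by
    have h0 := congrArg (fun w : EuclideanSpace ℝ (Fin 2) => w 0) htP
    simp only [vsub_eq_sub, PiLp.smul_apply, PiLp.sub_apply, smul_eq_mul] at h0
    linarith
  have hP1 : P 1 = tP * (C 1 - B 1) + B 1 := by
    have h0 := congrArg (fun w : EuclideanSpace ℝ (Fin 2) => w 1) htP
    simp only [vsub_eq_sub, PiLp.smul_apply, PiLp.sub_apply, smul_eq_mul] at h0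
    linarith
  have hQ0 : Q 0 = uQ * (A 0 - C 0) + C 0 := by
    have h0 := congrArg (fun w : EuclideanSpace ℝ (Fin 2) => w 0) huQ
    simp only [vsub_eq_sub, PiLp.smul_apply, PiLp.sub_apply, smul_eq_mul] at h0
    linarith
  have hQ1 : Q 1 = uQ * (A 1 - C 1) + C 1 := by
    have h0 := congrArg (fun w : EuclideanSpace ℝ (Fin 2) => w 1) huQ
    simp only [vsub_eq_sub, PiLp.smul_apply, PiLp.sub_apply, smul_eq_mul] at h0
    linarith
  have hR0 : R 0 = rR * (B 0 - A 0) + A 0 := by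
    have h0 := congrArg (fun w : EuclideanSpace ℝ (Fin 2) => w 0) hrR
    simp only [vsub_eq_sub, PiLp.smul_apply, PiLp.sub_apply, smul_eq_mul] at h0
    linarith
  have hR1 : R 1 = rR * (B 1 - A 1) + A 1 := by
    have h0 := congrArg (fun w : EuclideanSpace ℝ (Fin 2) => w 1) hrR
    simp only [vsub_eq_sub, PiLp.smul_apply, PiLp.sub_apply, smul_eq_mul] at h0
    linarith
  -- perpendicularity conditions in coordinates
  have htP' : (D 0 - P 0) * (B 0 - C 0) + (D 1 - P 1) * (B 1 - C 1) = 0 := by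
    have h0 := hPperp
    rw [inner_coord] at h0
    simpa [PiLp.sub_apply] using h0
  have huQ' : (D 0 - Q 0) * (C 0 - A 0) + (D 1 - Q 1) * (C 1 - A 1) = 0 := by
    have h0 := hQperp
    rw [inner_coord] at h0
    simpa [PiLp.sub_apply] using h0
  have hrR' : (D 0 - R 0) * (A 0 - B 0) + (D 1 - R 1) * (A 1 - B 1) = 0 := by
    have h0 := hRperp
    rw [inner_coord] at h0
    simpa [PiLp.sub_apply] using h0
  -- the two foot-distance identities
  have hPQ := foot_dist (B 0) (B 1) (C 0) (C 1) (A 0) (A 1) (D 0) (D 1)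
    (P 0) (P 1) (Q 0) (Q 1) tP uQ hP0 hP1 hQ0 hQ1 htP' huQ'
  have hQR := foot_dist (C 0) (C 1) (A 0) (A 1) (B 0) (B 1) (D 0) (D 1)
    (Q 0) (Q 1) (R 0) (R 1) uQ rR hQ0 hQ1 hR0 hR1 huQ' hrR'
  -- combine
  have hΔBC : 0 < (B 0 - C 0)^2 + (B 1 - C 1)^2 := delta_pos hBC
  have hΔCA : 0 < (C 0 - A 0)^2 + (C 1 - A 1)^2 := delta_pos (Ne.symm hAC)
  have hΔAB : 0 < (A 0 - B 0)^2 + (A 1 - B 1)^2 := delta_pos hAB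
  have hM : (0:ℝ) < ((B 0 - C 0)^2 + (B 1 - C 1)^2) * ((C 0 - A 0)^2 + (C 1 - A 1)^2)
      * ((A 0 - B 0)^2 + (A 1 - B 1)^2) := mul_pos (mul_pos hΔBC hΔCA) hΔAB
  have hsq : dist P Q ^ 2 = dist Q R ^ 2 := by
    have hmain : dist P Q ^ 2 * (((B 0 - C 0)^2 + (B 1 - C 1)^2)
          * ((C 0 - A 0)^2 + (C 1 - A 1)^2) * ((A 0 - B 0)^2 + (A 1 - B 1)^2))
        = dist Q R ^ 2 * (((B 0 - C 0)^2 + (B 1 - C 1)^2)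
          * ((C 0 - A 0)^2 + (C 1 - A 1)^2) * ((A 0 - B 0)^2 + (A 1 - B 1)^2)) := by
      rw [dist_sq_coord P Q, dist_sq_coord Q R]
      linear_combination ((A 0 - B 0)^2 + (A 1 - B 1)^2) * hPQ
        - ((B 0 - C 0)^2 + (B 1 - C 1)^2) * hQR
        + ((B 0 - C 0) * (A 1 - C 1) - (B 1 - C 1) * (A 0 - C 0))^2 * keyΔ
    exact mul_right_cancel₀ (ne_of_gt hM) hmain
  calc dist P Q = Real.sqrt (dist P Q ^ 2) := (Real.sqrt_sq dist_nonneg).symm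
    _ = Real.sqrt (dist Q R ^ 2) := by rw [hsq]
    _ = dist Q R := Real.sqrt_sq dist_nonneg
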